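/- Let L ∈ ℝ^{N×N} be the Laplacian of a connected weighted undirected graph (L symmetric, positive semidefinite, L𝟙_N = 0, with 0 a simple eigenvalue), let A, B ∈ ℝ^{n×n}, and assume the network is synchronized, i.e., A − λB is a Hurwitz matrix for every nonzero eigenvalue λ of L. Let π be an almost equitable partition with characteristic matrix P (so L(Im P) ⊆ Im P), and let L̂ = (PᵀP)⁻¹PᵀLP. Then the reduced network is synchronized, i.e., A − λ̂B is Hurwitz for every nonzero eigenvalue λ̂ of L̂. -/

import Mathlib

open Matrix Filter Topology Function
open scoped Kronecker

noncomputable section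

/-- Complexification of a real matrix. -/
def cplx {α β : Type*} (M : Matrix α β ℝ) : Matrix α β ℂ := M.map Complex.ofReal

/-- Transfer function `S(s) = C (sI - A)⁻¹ B` of the system `ẋ = Ax + Bu, y = Cx`. -/
def transfer {n m p : ℕ} (A : Matrix (Fin n) (Fin n) ℝ) (B : Matrix (Fin n) (Fin m) ℝ)
    (C : Matrix (Fin p) (Fin n) ℝ) (s : ℂ) : Matrix (Fin p) (Fin m) ℂ :=
  cplx C * (s • (1 : Matrix (Fin n) (Fin n) ℂ) - cplx A)⁻¹ * cplx B

/-- Squared H₂-norm: `(1/2π) ∫ tr(S(-iω)ᵀ S(iω)) dω`. -/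
def H2normSq {α β : Type*} [Fintype α] [Fintype β] (S : ℂ → Matrix α β ℂ) : ℝ :=
  (1 / (2 * Real.pi)) *
    ∫ ω : ℝ, ((S (-((ω : ℂ) * Complex.I)))ᵀ * S ((ω : ℂ) * Complex.I)).trace.re

/-- Largest singular value of a complex matrix (its ℓ²-operator norm). -/
def sigmaMax {α β : Type*} [Fintype α] [Fintype β] [DecidableEq β] (M : Matrix α β ℂ) : ℝ :=
  ‖LinearMap.toContinuousLinearMap (Matrix.toEuclideanLin M)‖

/-- Smallest singular value of a complex matrix: `√(λ_min(Mᴴ M))`. -/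
def sigmaMinC {α β : Type*} [Fintype α] [Fintype β] [DecidableEq β] (M : Matrix α β ℂ) : ℝ :=
  Real.sqrt (sInf (spectrum ℝ (Mᴴ * M)))

/-- H∞-norm: `sup_{ω ∈ ℝ} σ_max(S(iω))`. -/
def HinfNorm {α β : Type*} [Fintype α] [Fintype β] [DecidableEq β] (S : ℂ → Matrix α β ℂ) : ℝ :=
  ⨆ ω : ℝ, sigmaMax (S ((ω : ℂ) * Complex.I))

/-- Generalized unstable subspace `X₊(A)`: direct sum of the generalized eigenspaces of (the
complexification of) `A` corresponding to eigenvalues with nonnegative real part. -/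
def unstableSubspace {n : ℕ} (A : Matrix (Fin n) (Fin n) ℝ) : Submodule ℂ (Fin n → ℂ) :=
  ⨆ μ ∈ {μ : ℂ | 0 ≤ μ.re}, Module.End.maxGenEigenspace (Matrix.toLin' (cplx A)) μ

/-- A complex square matrix is Hurwitz if all its eigenvalues have negative real part. -/
def IsHurwitz {n : ℕ} (M : Matrix (Fin n) (Fin n) ℂ) : Prop :=
  ∀ μ ∈ spectrum ℂ M, μ.re < 0

/-- Transfer function `S_λ(s) = λ (sI - A + λB)⁻¹ E` of the auxiliary system. -/
def auxS {n r : ℕ} (A B : Matrix (Fin n) (Fin n) ℝ) (E : Matrix (Fin n) (Fin r) ℝ)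
    (lam : ℝ) (s : ℂ) : Matrix (Fin n) (Fin r) ℂ :=
  (lam : ℂ) • ((s • (1 : Matrix (Fin n) (Fin n) ℂ) - cplx A + (lam : ℂ) • cplx B)⁻¹ * cplx E)

/-- Transfer function `S(s) = (L⊗Iₙ)(sI - I_N⊗A + L⊗B)⁻¹(M⊗E)` of the original network. -/
def netS {N n r m : ℕ} (L : Matrix (Fin N) (Fin N) ℝ) (A B : Matrix (Fin n) (Fin n) ℝ)
    (E : Matrix (Fin n) (Fin r) ℝ) (M : Matrix (Fin N) (Fin m) ℝ) (s : ℂ) :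
    Matrix (Fin N × Fin n) (Fin m × Fin r) ℂ :=
  cplx (L ⊗ₖ (1 : Matrix (Fin n) (Fin n) ℝ)) *
    (s • (1 : Matrix (Fin N × Fin n) (Fin N × Fin n) ℂ) -
      cplx ((1 : Matrix (Fin N) (Fin N) ℝ) ⊗ₖ A - L ⊗ₖ B))⁻¹ *
    cplx (M ⊗ₖ E)

/-- Transfer function `Ŝ(s) = (LP⊗Iₙ)(sI - I_k⊗A + L̂⊗B)⁻¹(M̂⊗E)` of the reduced network. -/
def netShat {N n r m k : ℕ} (L : Matrix (Fin N) (Fin N) ℝ) (P : Matrix (Fin N) (Fin k) ℝ)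
    (Lhat : Matrix (Fin k) (Fin k) ℝ) (Mhat : Matrix (Fin k) (Fin m) ℝ)
    (A B : Matrix (Fin n) (Fin n) ℝ) (E : Matrix (Fin n) (Fin r) ℝ) (s : ℂ) :
    Matrix (Fin N × Fin n) (Fin m × Fin r) ℂ :=
  cplx ((L * P) ⊗ₖ (1 : Matrix (Fin n) (Fin n) ℝ)) *
    (s • (1 : Matrix (Fin k × Fin n) (Fin k × Fin n) ℂ) -
      cplx ((1 : Matrix (Fin k) (Fin k) ℝ) ⊗ₖ A - Lhat ⊗ₖ B))⁻¹ *
    cplx (Mhat ⊗ₖ E)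

/-- Transfer function `S(s) = L (sI + L)⁻¹ M` of the single-integrator network. -/
def singleS {N m : ℕ} (L : Matrix (Fin N) (Fin N) ℝ) (M : Matrix (Fin N) (Fin m) ℝ)
    (s : ℂ) : Matrix (Fin N) (Fin m) ℂ :=
  cplx L * (s • (1 : Matrix (Fin N) (Fin N) ℂ) + cplx L)⁻¹ * cplx M

/-- Transfer function `Ŝ(s) = LP (sI + L̂)⁻¹ M̂` of the reduced single-integrator network. -/
def singleShat {N m k : ℕ} (L : Matrix (Fin N) (Fin N) ℝ) (P : Matrix (Fin N) (Fin k) ℝ)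
    (Lhat : Matrix (Fin k) (Fin k) ℝ) (Mhat : Matrix (Fin k) (Fin m) ℝ) (s : ℂ) :
    Matrix (Fin N) (Fin m) ℂ :=
  cplx (L * P) * (s • (1 : Matrix (Fin k) (Fin k) ℂ) + cplx Lhat)⁻¹ * cplx Mhat

/-- Squared Frobenius norm `‖M‖_F² = tr(MᵀM)`. -/
def frobSq {α β : Type*} [Fintype α] [Fintype β] (M : Matrix α β ℝ) : ℝ := (Mᵀ * M).trace

end

theorem spec_iff' {n : ℕ} (M : Matrix (Fin n) (Fin n) ℂ) (μ : ℂ) :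
    μ ∈ spectrum ℂ M ↔ ∃ v : Fin n → ℂ, v ≠ 0 ∧ M.mulVec v = μ • v := by
  rw [(AlgEquiv.spectrum_eq Matrix.toLinAlgEquiv' M).symm,
    ← Module.End.hasEigenvalue_iff_mem_spectrum]
  constructor
  · intro h
    obtain ⟨v, hv⟩ := h.exists_hasEigenvector
    exact ⟨v, hv.2, by simpa [Matrix.toLinAlgEquiv'_apply] using hv.1⟩
  · rintro ⟨v, hv0, hv⟩
    exact Module.End.hasEigenvalue_of_hasEigenvector ⟨by
      simpa [Module.End.mem_eigenspace_iff, Matrix.toLinAlgEquiv'_apply] using hv, hv0⟩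

theorem cplx_mul' {a b c : Type*} [Fintype b] (M : Matrix a b ℝ) (N : Matrix b c ℝ) :
    cplx (M * N) = cplx M * cplx N := by
  ext i j
  simp [cplx, Matrix.mul_apply]

theorem aux_LP {N k : ℕ} (L : Matrix (Fin N) (Fin N) ℝ)
    (c : Fin N → Fin k) (hc : Function.Surjective c)
    (P : Matrix (Fin N) (Fin k) ℝ)
    (hP : P = Matrix.of fun i j => if c i = j then 1 else 0)
    (hAEP : Submodule.map L.mulVecLin (LinearMap.range P.mulVecLin) ≤
      LinearMap.range P.mulVecLin)
    (Lhat : Matrix (Fin k) (Fin k) ℝ) (hLhat : Lhat = (Pᵀ * P)⁻¹ * (Pᵀ * L * P)) :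
    L * P = P * Lhat := by
  classical
  set d : Fin k → ℝ := fun j => ((Finset.univ.filter fun i => c i = j).card : ℝ) with hd
  have hdne : ∀ j, d j ≠ 0 := by
    intro j
    obtain ⟨i, hi⟩ := hc j
    have hmem : i ∈ Finset.univ.filter fun i => c i = j := by simp [hi]
    have hpos : 0 < (Finset.univ.filter fun i => c i = j).card :=
      Finset.card_pos.mpr ⟨i, hmem⟩
    show ((Finset.univ.filter fun i => c i = j).card : ℝ) ≠ 0
    exact_mod_cast hpos.ne'
  have hPtP : Pᵀ * P = Matrix.diagonal d := by
    subst hP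
    ext j l
    simp only [Matrix.mul_apply, Matrix.transpose_apply, Matrix.of_apply]
    rcases eq_or_ne j l with rfl | h
    · rw [Matrix.diagonal_apply_eq]
      have he : ∀ i : Fin N, ((if c i = j then (1:ℝ) else 0) * if c i = j then 1 else 0)
          = if c i = j then 1 else 0 := fun i => by split_ifs <;> simp
      simp only [he, Finset.sum_boole]; rfl
    · rw [Matrix.diagonal_apply_ne _ h]
      refine Finset.sum_eq_zero fun i _ => ?_
      split_ifs with h1 h2 <;> simp_all
  have hdet : IsUnit (Pᵀ * P).det := by
    rw [hPtP, Matrix.det_diagonal]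
    exact (Finset.prod_ne_zero_iff.mpr fun j _ => hdne j).isUnit
  have hcol : ∀ j, ∃ w : Fin k → ℝ, P.mulVec w = (L * P).mulVec (Pi.single j 1) := by
    intro j
    have hmem : (L * P).mulVec (Pi.single j 1) ∈
        Submodule.map L.mulVecLin (LinearMap.range P.mulVecLin) := by
      refine ⟨P.mulVec (Pi.single j 1), ⟨Pi.single j 1, rfl⟩, ?_⟩
      simp only [Matrix.mulVecLin_apply]
      ext i
      simp [Matrix.mulVec, dotProduct, Matrix.mul_apply, Pi.single_apply, mul_ite, Finset.sum_ite_eq']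
    exact hAEP hmem
  choose Q hQ using hcol
  have hLP : L * P = P * (Matrix.of fun i j => Q j i) := by
    ext i j
    have h1 := congrFun (hQ j) i
    simp only [Matrix.mulVec_single, mul_one] at h1
    simpa [Matrix.mul_apply, Matrix.mulVec, dotProduct] using h1.symm
  have hassoc : Pᵀ * L * P = (Pᵀ * P) * (Matrix.of fun i j => Q j i) := by
    rw [Matrix.mul_assoc, hLP, ← Matrix.mul_assoc]
  have hLhatQ : Lhat = Matrix.of fun i j => Q j i := by
    rw [hLhat, hassoc, ← Matrix.mul_assoc, Matrix.nonsing_inv_mul _ hdet, Matrix.one_mul]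
  rw [hLhatQ, ← hLP]


/-- clustering a synchronized network according to an almost equitable
partition preserves synchronization: `A − λ̂B` is Hurwitz for every nonzero eigenvalue
`λ̂` of the reduced Laplacian `L̂`. -/
theorem stmt6 {N k n : ℕ} (L : Matrix (Fin N) (Fin N) ℝ)
    (hLpsd : L.PosSemidef) (hL1 : L.mulVec (fun _ => 1) = 0)
    (hLker : LinearMap.ker L.mulVecLin = Submodule.span ℝ {(fun _ => 1 : Fin N → ℝ)})
    (A B : Matrix (Fin n) (Fin n) ℝ)
    (hsync : ∀ μ ∈ spectrum ℂ (cplx L), μ ≠ 0 → IsHurwitz (cplx A - μ • cplx B))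
    (c : Fin N → Fin k) (hc : Function.Surjective c)
    (P : Matrix (Fin N) (Fin k) ℝ)
    (hP : P = Matrix.of fun i j => if c i = j then 1 else 0)
    (hAEP : Submodule.map L.mulVecLin (LinearMap.range P.mulVecLin) ≤
      LinearMap.range P.mulVecLin)
    (Lhat : Matrix (Fin k) (Fin k) ℝ) (hLhat : Lhat = (Pᵀ * P)⁻¹ * (Pᵀ * L * P)) :
    ∀ μ ∈ spectrum ℂ (cplx Lhat), μ ≠ 0 → IsHurwitz (cplx A - μ • cplx B) := by
  intro μ hμ hμ0
  refine hsync μ ?_ hμ0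
  have hLP : L * P = P * Lhat := aux_LP L c hc P hP hAEP Lhat hLhat
  have hC : cplx L * cplx P = cplx P * cplx Lhat := by
    rw [← cplx_mul', ← cplx_mul', hLP]
  obtain ⟨v, hv0, hv⟩ := (spec_iff' _ μ).mp hμ
  refine (spec_iff' _ μ).mpr ⟨(cplx P).mulVec v, ?_, ?_⟩
  · intro h
    apply hv0
    funext j
    obtain ⟨i, rfl⟩ := hc j
    have h2 := congrFun h i
    subst hP
    simpa [cplx, Matrix.mulVec, dotProduct, Matrix.map_apply, apply_ite,
      ite_mul, Finset.sum_ite_eq] using h2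
  · rw [Matrix.mulVec_mulVec, hC, ← Matrix.mulVec_mulVec, hv, Matrix.mulVec_smul]
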